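/- Let A and B be independent random elements (with values in ℝ^p and ℝ^q respectively) on a probability space and let g : ℝ^p × ℝ^q → ℝ^n be measurable with E[‖g(A,B)‖²] < ∞. Let D := Cov(E[g(A,B) | σ(A)]) be the covariance matrix of the componentwise conditional expectation of g(A,B) given σ(A), D^tot := Cov(g(A,B) − E[g(A,B) | σ(B)]), and Σ := Cov(g(A,B)). Then 0 ≤ trace(D) ≤ trace(D^tot) ≤ trace(Σ); in particular, if trace(Σ) > 0, the first-type indices satisfy 0 ≤ trace(D)/trace(Σ) ≤ trace(D^tot)/trace(Σ) ≤ 1. -/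

import Mathlib

open MeasureTheory ProbabilityTheory

lemma integrable_mul₂ {Ω : Type*} [MeasurableSpace Ω] {P : Measure Ω} {a b : Ω → ℝ}
    (ha : MemLp a 2 P) (hb : MemLp b 2 P) :
    Integrable (fun ω => a ω * b ω) P := by
  have h := hb.smul ha (p := 2) (q := 2) (r := 1)
  rw [memLp_one_iff_integrable] at h
  simpa [smul_eq_mul, Pi.mul_def] using h

lemma memℒp_two_condexp {Ω : Type*} {m : MeasurableSpace Ω} [m0 : MeasurableSpace Ω]
    {P : Measure Ω} [IsProbabilityMeasure P] (hm : m ≤ m0) {f : Ω → ℝ}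
    (hf : MemLp f 2 P) : MemLp (P[f|m]) 2 P := by
  set w : Lp ℝ 2 P := (condExpL2 ℝ ℝ hm (hf.toLp f) : Lp ℝ 2 P) with hw_def
  have hw : MemLp (w : Ω → ℝ) 2 P := Lp.memLp w
  have hint : Integrable (w : Ω → ℝ) P := hw.integrable one_le_two
  have heq : (w : Ω → ℝ) =ᵐ[P] P[f|m] := by
    refine ae_eq_condExp_of_forall_setIntegral_eq hm (hf.integrable one_le_two)
      (fun s _ _ => hint.integrableOn) (fun s hs hμs => ?_) ?_
    · rw [hw_def]
      rw [integral_condExpL2_eq hm (hf.toLp f) hs hμs.ne]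
      exact setIntegral_congr_ae (hm s hs) (hf.coeFn_toLp.mono fun x hx _ => hx)
    · exact lpMeas.aestronglyMeasurable _
  exact hw.ae_eq heq

lemma integral_condexp_mul_self {Ω : Type*} {m : MeasurableSpace Ω} [m0 : MeasurableSpace Ω]
    {P : Measure Ω} [IsProbabilityMeasure P] (hm : m ≤ m0) {f : Ω → ℝ}
    (hf : MemLp f 2 P) :
    ∫ ω, (P[f|m]) ω * f ω ∂P = ∫ ω, (P[f|m]) ω * (P[f|m]) ω ∂P := by
  have hu := memℒp_two_condexp hm hf
  have hint : Integrable (fun ω => (P[f|m]) ω * f ω) P := integrable_mul₂ hu hf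
  have hmul : P[(P[f|m]) * f|m] =ᵐ[P] (P[f|m]) * (P[f|m]) :=
    condExp_mul_of_stronglyMeasurable_left stronglyMeasurable_condExp hint (hf.integrable one_le_two)
  calc ∫ ω, (P[f|m]) ω * f ω ∂P = ∫ ω, (P[((P[f|m]) * f)|m]) ω ∂P :=
        (integral_condExp hm).symm
    _ = ∫ ω, (P[f|m]) ω * (P[f|m]) ω ∂P := integral_congr_ae hmul

lemma integral_sub_mul_sub {Ω : Type*} [MeasurableSpace Ω] {P : Measure Ω} {a b c d : Ω → ℝ}
    (ha : MemLp a 2 P) (hb : MemLp b 2 P) (hc : MemLp c 2 P) (hd : MemLp d 2 P) :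
    ∫ ω, (a ω - b ω) * (c ω - d ω) ∂P =
      ∫ ω, a ω * c ω ∂P - ∫ ω, a ω * d ω ∂P - ∫ ω, b ω * c ω ∂P + ∫ ω, b ω * d ω ∂P := by
  have Iac := integrable_mul₂ ha hc
  have Iad := integrable_mul₂ ha hd
  have Ibc := integrable_mul₂ hb hc
  have Ibd := integrable_mul₂ hb hd
  have h : (fun ω => (a ω - b ω) * (c ω - d ω)) =
      fun ω => (a ω * c ω - a ω * d ω) - (b ω * c ω - b ω * d ω) := funext fun ω => by ring
  have h1 : Integrable (fun ω => a ω * c ω - a ω * d ω) P := Iac.sub Iad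
  have h2 : Integrable (fun ω => b ω * c ω - b ω * d ω) P := Ibc.sub Ibd
  rw [h, integral_sub h1 h2, integral_sub Iac Iad, integral_sub Ibc Ibd]
  ring

lemma integrable_mul₂' {Ω : Type*} [MeasurableSpace Ω] {P : Measure Ω} {a b : Ω → ℝ}
    (ha : MemLp a 2 P) (hb : MemLp b 2 P) :
    Integrable (fun ω => a ω * b ω) P := by
  have h := hb.smul ha (p := 2) (q := 2) (r := 1)
  rw [memLp_one_iff_integrable] at h
  simpa [smul_eq_mul, Pi.mul_def] using h

lemma integral_sub_mul_sub' {Ω : Type*} [MeasurableSpace Ω] {P : Measure Ω} {a b c d : Ω → ℝ}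
    (ha : MemLp a 2 P) (hb : MemLp b 2 P) (hc : MemLp c 2 P) (hd : MemLp d 2 P) :
    ∫ ω, (a ω - b ω) * (c ω - d ω) ∂P =
      ∫ ω, a ω * c ω ∂P - ∫ ω, a ω * d ω ∂P - ∫ ω, b ω * c ω ∂P + ∫ ω, b ω * d ω ∂P := by
  have Iac := integrable_mul₂' ha hc
  have Iad := integrable_mul₂' ha hd
  have Ibc := integrable_mul₂' hb hc
  have Ibd := integrable_mul₂' hb hd
  have h : (fun ω => (a ω - b ω) * (c ω - d ω)) =
      fun ω => (a ω * c ω - a ω * d ω) - (b ω * c ω - b ω * d ω) := funext fun ω => by ring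
  have h1 : Integrable (fun ω => a ω * c ω - a ω * d ω) P := Iac.sub Iad
  have h2 : Integrable (fun ω => b ω * c ω - b ω * d ω) P := Ibc.sub Ibd
  rw [h, integral_sub h1 h2, integral_sub Iac Iad, integral_sub Ibc Ibd]
  ring

lemma integral_var_expand' {Ω : Type*} [MeasurableSpace Ω] {P : Measure Ω}
    [IsProbabilityMeasure P] {h : Ω → ℝ} (hh : MemLp h 2 P) :
    ∫ ω, (h ω - ∫ ω', h ω' ∂P) * (h ω - ∫ ω', h ω' ∂P) ∂P
      = ∫ ω, h ω * h ω ∂P - (∫ ω, h ω ∂P) * (∫ ω, h ω ∂P) := by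
  set c : Ω → ℝ := fun _ => ∫ ω', h ω' ∂P with hc_def
  have hc : MemLp c 2 P := memLp_const _
  have e := integral_sub_mul_sub' hh hc hh hc
  have e1 : ∫ ω, h ω * c ω ∂P = (∫ ω', h ω' ∂P) * (∫ ω', h ω' ∂P) := by
    simp only [hc_def]; rw [integral_mul_const]
  have e2 : ∫ ω, c ω * h ω ∂P = (∫ ω', h ω' ∂P) * (∫ ω', h ω' ∂P) := by
    simp only [hc_def]; rw [integral_const_mul]
  have e3 : ∫ ω, c ω * c ω ∂P = (∫ ω', h ω' ∂P) * (∫ ω', h ω' ∂P) := by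
    simp only [hc_def]; simp
  rw [show (fun ω => (h ω - ∫ ω', h ω' ∂P) * (h ω - ∫ ω', h ω' ∂P))
      = fun ω => (h ω - c ω) * (h ω - c ω) from rfl]
  rw [e, e1, e2, e3]; ring


/-- The covariance matrix of an `ℝ^n`-valued random vector `h`:
`(Cov h)_{i j} = E[(h_i − E h_i)(h_j − E h_j)]`. -/
noncomputable def covMatrix {Ω : Type*} [MeasurableSpace Ω] (P : Measure Ω) {n : ℕ}
    (h : Ω → Fin n → ℝ) : Matrix (Fin n) (Fin n) ℝ :=
  fun i j => ∫ ω, (h ω i - ∫ ω', h ω' i ∂P) * (h ω j - ∫ ω', h ω' j ∂P) ∂P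

/-- first-type inequality chain of Proposition 3: for independent inputs
`A`, `B` and a square-integrable output `g(A,B)`, with `D` the covariance matrix of the
componentwise conditional expectation of `g(A,B)` given `σ(A)`,
`Dtot = Cov(g(A,B) − E[g(A,B) | σ(B)])`, and `Σ' = Cov(g(A,B))`, one has
`0 ≤ trace D ≤ trace Dtot ≤ trace Σ'`; in particular, if `trace Σ' > 0`, the first-type
dependent generalized sensitivity indices satisfy
`0 ≤ trace D / trace Σ' ≤ trace Dtot / trace Σ' ≤ 1`. -/
theorem dGSI_first_type_inequalities
    {Ω : Type*} [MeasurableSpace Ω] (P : Measure Ω) [IsProbabilityMeasure P]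
    (p q n : ℕ)
    (A : Ω → Fin p → ℝ) (B : Ω → Fin q → ℝ)
    (hA : Measurable A) (hB : Measurable B) (hAB : IndepFun A B P)
    (g : (Fin p → ℝ) × (Fin q → ℝ) → Fin n → ℝ) (hg : Measurable g)
    (hint : MemLp (fun ω => g (A ω, B ω)) 2 P)
    (D Dtot Sig : Matrix (Fin n) (Fin n) ℝ)
    (hD : D = covMatrix P (fun ω i =>
      (P[fun ω' => g (A ω', B ω') i | MeasurableSpace.comap A inferInstance]) ω))
    (hDtot : Dtot = covMatrix P (fun ω i =>
      g (A ω, B ω) i -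
        (P[fun ω' => g (A ω', B ω') i | MeasurableSpace.comap B inferInstance]) ω))
    (hSig : Sig = covMatrix P (fun ω => g (A ω, B ω))) :
    0 ≤ D.trace ∧ D.trace ≤ Dtot.trace ∧ Dtot.trace ≤ Sig.trace ∧
      (0 < Sig.trace →
        0 ≤ D.trace / Sig.trace ∧ D.trace / Sig.trace ≤ Dtot.trace / Sig.trace ∧
          Dtot.trace / Sig.trace ≤ 1) := by
  have hmA : MeasurableSpace.comap A inferInstance ≤ ‹MeasurableSpace Ω› := hA.comap_le
  have hmB : MeasurableSpace.comap B inferInstance ≤ ‹MeasurableSpace Ω› := hB.comap_le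
  have key : ∀ i : Fin n, 0 ≤ D i i ∧ D i i ≤ Dtot i i ∧ Dtot i i ≤ Sig i i := by
    intro i
    set f : Ω → ℝ := fun ω => g (A ω, B ω) i with hf_def
    have hf : MemLp f 2 P :=
      (ContinuousLinearMap.proj (R := ℝ) (φ := fun _ : Fin n => ℝ) i).comp_memLp' hint
    set u : Ω → ℝ := P[f | MeasurableSpace.comap A inferInstance] with hu_def
    set v : Ω → ℝ := P[f | MeasurableSpace.comap B inferInstance] with hv_def
    have hu2 : MemLp u 2 P := memℒp_two_condexp hmA hf
    have hv2 : MemLp v 2 P := memℒp_two_condexp hmB hf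
    have Eu : ∫ ω, u ω ∂P = ∫ ω, f ω ∂P := integral_condExp hmA
    have Ev : ∫ ω, v ω ∂P = ∫ ω, f ω ∂P := integral_condExp hmB
    have keyu : ∫ ω, u ω * f ω ∂P = ∫ ω, u ω * u ω ∂P := integral_condexp_mul_self hmA hf
    have keyv : ∫ ω, v ω * f ω ∂P = ∫ ω, v ω * v ω ∂P := integral_condexp_mul_self hmB hf
    have commu : ∫ ω, f ω * u ω ∂P = ∫ ω, u ω * f ω ∂P := by
      congr 1; funext ω; ring
    have commv : ∫ ω, f ω * v ω ∂P = ∫ ω, v ω * f ω ∂P := by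
      congr 1; funext ω; ring
    have hiuv : IndepFun u v P := by
      rw [IndepFun_iff_Indep]
      have h1 : MeasurableSpace.comap u inferInstance ≤ MeasurableSpace.comap A inferInstance :=
        Measurable.comap_le (stronglyMeasurable_condExp.measurable)
      have h2 : MeasurableSpace.comap v inferInstance ≤ MeasurableSpace.comap B inferInstance :=
        Measurable.comap_le (stronglyMeasurable_condExp.measurable)
      exact indep_of_indep_of_le_left
        (indep_of_indep_of_le_right ((IndepFun_iff_Indep A B P).mp hAB) h2) h1
    have orth : ∫ ω, u ω * v ω ∂P = (∫ ω, f ω ∂P) * (∫ ω, f ω ∂P) := by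
      have h := hiuv.integral_mul_eq_mul_integral (hu2.integrable one_le_two).aestronglyMeasurable
        (hv2.integrable one_le_two).aestronglyMeasurable
      simpa [Pi.mul_apply, Eu, Ev] using h
    have orth' : ∫ ω, v ω * u ω ∂P = (∫ ω, f ω ∂P) * (∫ ω, f ω ∂P) := by
      rw [show (fun ω => v ω * u ω) = fun ω => u ω * v ω from funext fun ω => by ring, orth]
    set μf : ℝ := ∫ ω, f ω ∂P with hμf_def
    set cf : Ω → ℝ := fun _ => μf with hcf_def
    have hcf2 : MemLp cf 2 P := memLp_const _
    have Ifc : ∫ ω, f ω * cf ω ∂P = μf * μf := by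
      simp only [hcf_def]; rw [integral_mul_const]
    have Icf : ∫ ω, cf ω * f ω ∂P = μf * μf := by
      simp only [hcf_def]; rw [integral_const_mul]
    have Iuc : ∫ ω, u ω * cf ω ∂P = μf * μf := by
      simp only [hcf_def]; rw [integral_mul_const, Eu]
    have Icu : ∫ ω, cf ω * u ω ∂P = μf * μf := by
      simp only [hcf_def]; rw [integral_const_mul, Eu]
    have Ivc : ∫ ω, v ω * cf ω ∂P = μf * μf := by
      simp only [hcf_def]; rw [integral_mul_const, Ev]
    have Icv : ∫ ω, cf ω * v ω ∂P = μf * μf := by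
      simp only [hcf_def]; rw [integral_const_mul, Ev]
    have Icc : ∫ ω, cf ω * cf ω ∂P = μf * μf := by
      simp only [hcf_def]; simp
    -- diagonal entries
    have hDii : D i i = ∫ ω, u ω * u ω ∂P - μf * μf := by
      have : D i i = ∫ ω, (u ω - ∫ ω', u ω' ∂P) * (u ω - ∫ ω', u ω' ∂P) ∂P := by
        rw [hD]; rfl
      rw [this, integral_var_expand' hu2, Eu]
    have hSii : Sig i i = ∫ ω, f ω * f ω ∂P - μf * μf := by
      have : Sig i i = ∫ ω, (f ω - ∫ ω', f ω' ∂P) * (f ω - ∫ ω', f ω' ∂P) ∂P := by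
        rw [hSig]; rfl
      rw [this, integral_var_expand' hf]
    -- Dtot entry
    set h : Ω → ℝ := fun ω => f ω - v ω with hh_def
    have hh2 : MemLp h 2 P := hf.sub hv2
    have Eh : ∫ ω, h ω ∂P = 0 := by
      simp only [hh_def]
      rw [integral_sub (hf.integrable one_le_two) (hv2.integrable one_le_two), Ev]
      ring
    have Ihh : ∫ ω, h ω * h ω ∂P = ∫ ω, f ω * f ω ∂P - ∫ ω, v ω * v ω ∂P := by
      simp only [hh_def]
      rw [integral_sub_mul_sub' hf hv2 hf hv2, commv, keyv]
      ring
    have hTii : Dtot i i = ∫ ω, f ω * f ω ∂P - ∫ ω, v ω * v ω ∂P := by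
      have : Dtot i i = ∫ ω, (h ω - ∫ ω', h ω' ∂P) * (h ω - ∫ ω', h ω' ∂P) ∂P := by
        rw [hDtot]; rfl
      rw [this, integral_var_expand' hh2, Eh, Ihh]
      ring
    -- positivity facts
    have posD : 0 ≤ D i i := by
      have : D i i = ∫ ω, (u ω - ∫ ω', u ω' ∂P) * (u ω - ∫ ω', u ω' ∂P) ∂P := by
        rw [hD]; rfl
      rw [this]
      exact integral_nonneg fun ω => mul_self_nonneg _
    have posv : μf * μf ≤ ∫ ω, v ω * v ω ∂P := by
      have h0 : 0 ≤ ∫ ω, (v ω - ∫ ω', v ω' ∂P) * (v ω - ∫ ω', v ω' ∂P) ∂P :=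
        integral_nonneg fun ω => mul_self_nonneg _
      rw [integral_var_expand' hv2, Ev] at h0
      linarith
    -- the middle inequality
    set fu : Ω → ℝ := fun ω => f ω - u ω with hfu_def
    set vc : Ω → ℝ := fun ω => v ω - cf ω with hvc_def
    have hfu2 : MemLp fu 2 P := hf.sub hu2
    have hvc2 : MemLp vc 2 P := hv2.sub hcf2
    have posr : 0 ≤ ∫ ω, (fu ω - vc ω) * (fu ω - vc ω) ∂P :=
      integral_nonneg fun ω => mul_self_nonneg _
    have efufu : ∫ ω, fu ω * fu ω ∂P
        = ∫ ω, f ω * f ω ∂P - ∫ ω, u ω * u ω ∂P := by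
      simp only [hfu_def]
      rw [integral_sub_mul_sub' hf hu2 hf hu2, commu, keyu]; ring
    have efuvc : ∫ ω, fu ω * vc ω ∂P = ∫ ω, v ω * v ω ∂P - μf * μf := by
      simp only [hfu_def, hvc_def]
      rw [integral_sub_mul_sub' hf hu2 hv2 hcf2, commv, keyv, Ifc, orth, Iuc]
      ring
    have evcfu : ∫ ω, vc ω * fu ω ∂P = ∫ ω, v ω * v ω ∂P - μf * μf := by
      simp only [hfu_def, hvc_def]
      rw [integral_sub_mul_sub' hv2 hcf2 hf hu2, keyv, Icf, orth', Icu]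
      ring
    have evcvc : ∫ ω, vc ω * vc ω ∂P = ∫ ω, v ω * v ω ∂P - μf * μf := by
      simp only [hvc_def]
      rw [integral_sub_mul_sub' hv2 hcf2 hv2 hcf2, Ivc, Icv, Icc]; ring
    rw [integral_sub_mul_sub' hfu2 hvc2 hfu2 hvc2, efufu, efuvc, evcfu, evcvc] at posr
    refine ⟨posD, ?_, ?_⟩
    · rw [hDii, hTii]; linarith
    · rw [hTii, hSii]; linarith
  -- assemble traces
  have trD : D.trace = ∑ i, D i i := by simp [Matrix.trace, Matrix.diag]
  have trT : Dtot.trace = ∑ i, Dtot i i := by simp [Matrix.trace, Matrix.diag]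
  have trS : Sig.trace = ∑ i, Sig i i := by simp [Matrix.trace, Matrix.diag]
  have h0 : 0 ≤ D.trace := by
    rw [trD]; exact Finset.sum_nonneg fun i _ => (key i).1
  have h1 : D.trace ≤ Dtot.trace := by
    rw [trD, trT]; exact Finset.sum_le_sum fun i _ => (key i).2.1
  have h2 : Dtot.trace ≤ Sig.trace := by
    rw [trT, trS]; exact Finset.sum_le_sum fun i _ => (key i).2.2
  refine ⟨h0, h1, h2, fun hS => ⟨div_nonneg h0 (le_of_lt hS), ?_, ?_⟩⟩
  · exact by gcongr
  · exact (div_le_one hS).mpr h2
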